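/- Let F : I^op → Cat be a pseudofunctor on a small category I and define the rectification F^r : I^op → Cat by F^r(i) = ∫_{i/I} (F ∘ π_i), where π_i : i/I → I is the forgetful functor from the comma category, and with a* : F^r(i) → F^r(j) for a : j → i induced by precomposition with a. Then F^r is a strict functor: 1_i* = 1_{F^r(i)} and b* a* = (ab)* hold on the nose. -/

import Mathlib

open CategoryTheory CategoryTheory.Bicategory Opposite

universe v₂ u₂ v₁ u₁

namespace RectifyStmt

variable {I : Type u₁} [Category.{v₁} I]
variable (F : Pseudofunctor (LocallyDiscrete Iᵒᵖ) Cat.{v₂, u₂})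

/-- Objects of the rectification `F^r(i) = ∫_{i/I} (F ∘ π_i)`: pairs `(x, b : i → k)`
with `x ∈ F k`. -/
structure RObj (i : I) where
  tgt : I
  arr : i ⟶ tgt
  pt : F.obj ⟨op tgt⟩

variable {F}

/-- Morphisms `(u, d) : (y, c : i → l) → (x, b : i → k)` of `F^r(i)`: `d : l → k` with
`d ∘ c = b` and `u : y → d* x`. -/
structure RHom {i : I} (Y X : RObj F i) where
  d : Y.tgt ⟶ X.tgt
  w : Y.arr ≫ d = X.arr
  u : Y.pt ⟶ (F.map d.op.toLoc).toFunctor.obj X.pt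

/-- The functor `a* : F^r(i) → F^r(j)` induced by `a : j → i`, on objects:
precomposition with `a`. -/
def reindexObj {j i : I} (a : j ⟶ i) (X : RObj F i) : RObj F j :=
  ⟨X.tgt, a ≫ X.arr, X.pt⟩

/-- The functor `a* : F^r(i) → F^r(j)` on morphisms. -/
def reindexHom {j i : I} (a : j ⟶ i) {Y X : RObj F i} (f : RHom Y X) :
    RHom (reindexObj a Y) (reindexObj a X) :=
  ⟨f.d, by simp [reindexObj, f.w], f.u⟩

lemma rhom_heq {i t t' : I} {a1 a2 : i ⟶ t} {b1 b2 : i ⟶ t'}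
    {x : F.obj ⟨op t⟩} {y : F.obj ⟨op t'⟩}
    (ha : a1 = a2) (hb : b1 = b2) (d : t ⟶ t') (w1 : a1 ≫ d = b1) (w2 : a2 ≫ d = b2)
    (u : x ⟶ (F.map d.op.toLoc).toFunctor.obj y) :
    HEq (RHom.mk (Y := ⟨t, a1, x⟩) (X := ⟨t', b1, y⟩) d w1 u)
        (RHom.mk (Y := ⟨t, a2, x⟩) (X := ⟨t', b2, y⟩) d w2 u) := by
  subst ha hb; rfl

/-- The rectification `F^r` of a pseudofunctor `F : I^op → Cat` is a *strict* functor: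
`1_i* = 1_{F^r(i)}` and `b* a* = (ab)*` hold on the nose, both on objects and on
morphisms. -/
theorem rectification_is_strict (F : Pseudofunctor (LocallyDiscrete Iᵒᵖ) Cat.{v₂, u₂}) :
    -- strict unitality
    (∀ (i : I) (X : RObj F i), reindexObj (𝟙 i) X = X) ∧
    (∀ (i : I) (Y X : RObj F i) (f : RHom Y X), HEq (reindexHom (𝟙 i) f) f) ∧
    -- strict functoriality: `b* (a* X) = (ab)* X`
    (∀ (k j i : I) (b : k ⟶ j) (a : j ⟶ i) (X : RObj F i),
      reindexObj b (reindexObj a X) = reindexObj (b ≫ a) X) ∧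
    (∀ (k j i : I) (b : k ⟶ j) (a : j ⟶ i) (Y X : RObj F i) (f : RHom Y X),
      HEq (reindexHom b (reindexHom a f)) (reindexHom (b ≫ a) f)) := by
  refine ⟨fun i X => ?_, fun i Y X f => ?_, fun k j i b a X => ?_, fun k j i b a Y X f => ?_⟩
  · simp [reindexObj]
  · obtain ⟨t, c, y⟩ := Y; obtain ⟨t', b', x⟩ := X; cases f
    exact rhom_heq (by simp [reindexObj]) (by simp [reindexObj]) _ _ _ _
  · simp [reindexObj]
  · obtain ⟨t, c, y⟩ := Y; obtain ⟨t', b', x⟩ := X; cases f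
    exact rhom_heq (by simp [reindexObj]) (by simp [reindexObj]) _ _ _ _

end RectifyStmt
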